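/- For any bimould A ∈ BARI, the operator amit(A) is a derivation for the mu-multiplication of bimoulds: amit(A)·mu(B,C) = mu(amit(A)·B, C) + mu(B, amit(A)·C) for all B, C ∈ BARI. -/

import Mathlib

/-- A bimould: a function of words whose letters are pairs `wᵢ = (uᵢ, vᵢ)` of complex numbers. -/
abbrev Bimould := List (ℂ × ℂ) → ℂ

/-- All decompositions of a word `w` into three (possibly empty) consecutive blocks. -/
def decomp3 {α : Type*} (w : List α) : List (List α × List α × List α) :=
  (List.range (w.length + 1)).flatMap (fun i =>
    (List.range (w.length - i + 1)).map (fun j =>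
      (w.take i, (w.drop i).take j, (w.drop i).drop j)))

namespace Bimould

/-- The flexion `a⌈c`: the first `u`-variable of `c` absorbs the `u`-variables of `b`. -/
def flexAC (a b c : List (ℂ × ℂ)) : List (ℂ × ℂ) :=
  match c with
  | [] => a
  | ch :: ct => a ++ ((b.map Prod.fst).sum + ch.1, ch.2) :: ct

/-- The flexion `b⌋`: subtract the first `v`-variable of `c` from all `v`-variables of `b`. -/
def flexBr (b c : List (ℂ × ℂ)) : List (ℂ × ℂ) :=
  b.map (fun p => (p.1, p.2 - (c.headD (0, 0)).2))

/-- Mould multiplication `mu`. -/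
def mu (M N : Bimould) : Bimould := fun w =>
  ((List.range (w.length + 1)).map (fun i => M (w.take i) * N (w.drop i))).sum

/-- The operator `amit(B)` applied to `A`:
`(amit(B)·A)(w) = Σ_{w = abc, b ≠ ∅, c ≠ ∅} A(a⌈c) B(b⌋)`. -/
noncomputable def amit (B A : Bimould) : Bimould := fun w =>
  ((decomp3 w).map (fun d =>
    if d.2.1 ≠ [] ∧ d.2.2 ≠ [] then A (flexAC d.1 d.2.1 d.2.2) * B (flexBr d.2.1 d.2.2)
    else 0)).sum

end Bimould

namespace AmitProof
open Bimould

private lemma sum_flatMap' {α : Type*} (l : List α) (f : α → List ℂ) :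
    (l.flatMap f).sum = (l.map (fun x => (f x).sum)).sum := by
  induction l with
  | nil => rfl
  | cons h t ih => simp [List.flatMap_cons, ih]

private lemma flexAC_cons (a b : List (ℂ × ℂ)) (ch : ℂ × ℂ) (ct : List (ℂ × ℂ)) :
    flexAC a b (ch :: ct) = a ++ ((b.map Prod.fst).sum + ch.1, ch.2) :: ct := rfl

private lemma length_flexAC (a b c : List (ℂ × ℂ)) (hc : c ≠ []) :
    (flexAC a b c).length = a.length + c.length := by
  cases c with
  | nil => simp at hc
  | cons ch ct => simp [flexAC_cons]

private lemma flexAC_take (a b c : List (ℂ × ℂ)) (t : ℕ) (ht : t ≤ a.length) (hc : c ≠ []) :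
    (flexAC a b c).take t = a.take t := by
  cases c with
  | nil => simp at hc
  | cons ch ct => rw [flexAC_cons, List.take_append_of_le_length ht]

private lemma flexAC_drop (a b c : List (ℂ × ℂ)) (t : ℕ) (ht : t ≤ a.length) (hc : c ≠ []) :
    (flexAC a b c).drop t = flexAC (a.drop t) b c := by
  cases c with
  | nil => simp at hc
  | cons ch ct => rw [flexAC_cons, List.drop_append_of_le_length ht, flexAC_cons]

private lemma flexAC_take' (a b c : List (ℂ × ℂ)) (s : ℕ) (hs : 1 ≤ s) :
    (flexAC a b c).take (a.length + s) = flexAC a b (c.take s) := by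
  cases c with
  | nil => simp [flexAC]
  | cons ch ct =>
    obtain ⟨s', rfl⟩ : ∃ s', s = s' + 1 := ⟨s - 1, by omega⟩
    rw [flexAC_cons, List.take_append]
    simp [flexAC_cons]

private lemma flexAC_drop' (a b c : List (ℂ × ℂ)) (s : ℕ) (hs : 1 ≤ s) :
    (flexAC a b c).drop (a.length + s) = c.drop s := by
  cases c with
  | nil => simp [flexAC]
  | cons ch ct =>
    obtain ⟨s', rfl⟩ : ∃ s', s = s' + 1 := ⟨s - 1, by omega⟩
    rw [flexAC_cons, List.drop_append]
    simp

private lemma flexBr_take (b c : List (ℂ × ℂ)) (s : ℕ) (hs : 1 ≤ s) (hc : c ≠ []) :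
    flexBr b (c.take s) = flexBr b c := by
  cases c with
  | nil => simp at hc
  | cons ch ct =>
    obtain ⟨s', rfl⟩ : ∃ s', s = s' + 1 := ⟨s - 1, by omega⟩
    rfl

private lemma mu_formula (M N : Bimould) (u : List (ℂ × ℂ)) :
    mu M N u = ∑ t ∈ Finset.range (u.length + 1), M (u.take t) * N (u.drop t) := rfl

end AmitProof

namespace AmitProof
open Bimould

private lemma sum_range_guard (m n : ℕ) (hmn : m ≤ n) (F : ℕ → ℂ) :
    ∑ t ∈ Finset.range (n+1), (if t ≤ m then F t else 0) = ∑ t ∈ Finset.range (m+1), F t := by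
  rw [← Finset.sum_subset (Finset.range_subset_range.2 (by omega : m+1 ≤ n+1))
    (fun t _ hts => by simp only [Finset.mem_range] at hts ⊢; rw [if_neg (by omega)])]
  exact Finset.sum_congr rfl fun t ht => by
    simp only [Finset.mem_range] at ht; rw [if_pos (by omega)]

private lemma sum_range_extend (k n : ℕ) (hkn : k ≤ n) (F : ℕ → ℂ)
    (h : ∀ t, k < t → F t = 0) :
    ∑ t ∈ Finset.range (k+1), F t = ∑ t ∈ Finset.range (n+1), F t :=
  Finset.sum_subset (Finset.range_subset_range.2 (by omega))
    (fun t ht hts => h t (by simp only [Finset.mem_range] at ht hts; omega))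

private lemma amit_formula (A' M : Bimould) (w : List (ℂ × ℂ)) :
    amit A' M w = ∑ i ∈ Finset.range (w.length + 1), ∑ j ∈ Finset.range (w.length + 1),
      if 1 ≤ j ∧ i + j < w.length then
        M (flexAC (w.take i) ((w.drop i).take j) (w.drop (i+j))) *
          A' (flexBr ((w.drop i).take j) (w.drop (i+j))) else 0 := by
  unfold amit decomp3
  rw [List.map_flatMap, sum_flatMap']
  show ∑ i ∈ Finset.range (w.length + 1), _ = _
  refine Finset.sum_congr rfl fun i hi => ?_
  rw [List.map_map]
  show ∑ j ∈ Finset.range (w.length - i + 1), _ = _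
  rw [sum_range_extend (w.length - i) w.length (by omega) _
    (fun j hj => by
      simp only [Function.comp]
      rw [if_neg]
      simp only [Finset.mem_range] at hi
      rintro ⟨h1, h2⟩
      rw [← List.length_pos_iff_ne_nil, List.length_drop, List.length_drop] at h2
      omega)]
  refine Finset.sum_congr rfl fun j hj => ?_
  simp only [Function.comp, List.drop_drop]
  have hiff : (List.take j (List.drop i w) ≠ [] ∧ List.drop (i + j) w ≠ []) ↔
      (1 ≤ j ∧ i + j < w.length) := by
    rw [← List.length_pos_iff_ne_nil, ← List.length_pos_iff_ne_nil, List.length_take,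
      List.length_drop, List.length_drop]
    omega
  simp only [hiff]

end AmitProof

namespace AmitProof
open Bimould

def cube (n : ℕ) : Finset (ℕ × ℕ × ℕ) :=
  Finset.range (n+1) ×ˢ Finset.range (n+1) ×ˢ Finset.range (n+1)

def fL (A B C : Bimould) (w : List (ℂ × ℂ)) (x : ℕ × ℕ × ℕ) : ℂ :=
  B ((flexAC (w.take x.1) ((w.drop x.1).take x.2.1) (w.drop (x.1 + x.2.1))).take x.2.2) *
  C ((flexAC (w.take x.1) ((w.drop x.1).take x.2.1) (w.drop (x.1 + x.2.1))).drop x.2.2) *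
  A (flexBr ((w.drop x.1).take x.2.1) (w.drop (x.1 + x.2.1)))

/-- term for `mu (amit A B) C`, indexed by `(k, i, j)`. -/
def f1 (A B C : Bimould) (w : List (ℂ × ℂ)) (y : ℕ × ℕ × ℕ) : ℂ :=
  B (flexAC (w.take y.2.1) ((w.drop y.2.1).take y.2.2)
      ((w.drop (y.2.1 + y.2.2)).take (y.1 - (y.2.1 + y.2.2)))) *
  A (flexBr ((w.drop y.2.1).take y.2.2)
      ((w.drop (y.2.1 + y.2.2)).take (y.1 - (y.2.1 + y.2.2)))) *
  C (w.drop y.1)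

/-- term for `mu B (amit A C)`, indexed by `(t, i, j)`. -/
def f2 (A B C : Bimould) (w : List (ℂ × ℂ)) (y : ℕ × ℕ × ℕ) : ℂ :=
  B (w.take y.1) *
  (C (flexAC ((w.drop y.1).take y.2.1) ((w.drop (y.1 + y.2.1)).take y.2.2)
        (w.drop (y.1 + (y.2.1 + y.2.2)))) *
   A (flexBr ((w.drop (y.1 + y.2.1)).take y.2.2) (w.drop (y.1 + (y.2.1 + y.2.2)))))

variable (A B C : Bimould)

private lemma LHS_eq (w : List (ℂ × ℂ)) :
    amit A (mu B C) w = ∑ x ∈ cube w.length,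
      if 1 ≤ x.2.1 ∧ x.1 + x.2.1 < w.length ∧ x.2.2 ≤ w.length - x.2.1
      then fL A B C w x else 0 := by
  set n := w.length with hn
  rw [amit_formula]
  rw [cube, Finset.sum_product]
  refine Finset.sum_congr rfl fun i hi => ?_
  rw [Finset.sum_product]
  refine Finset.sum_congr rfl fun j hj => ?_
  simp only [Finset.mem_range] at hi hj
  by_cases h : 1 ≤ j ∧ i + j < n
  · rw [if_pos h]
    obtain ⟨h1, h2⟩ := h
    have hc : w.drop (i + j) ≠ [] := by
      rw [ne_eq, List.drop_eq_nil_iff]; push_neg; omega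
    have hg : (flexAC (w.take i) ((w.drop i).take j) (w.drop (i+j))).length = n - j := by
      rw [length_flexAC _ _ _ hc, List.length_take, List.length_drop]
      omega
    rw [mu_formula, hg, Finset.sum_mul, ← sum_range_guard (n - j) n (by omega)]
    refine Finset.sum_congr rfl fun t ht => ?_
    by_cases htj : t ≤ n - j
    · rw [if_pos htj, if_pos ⟨h1, h2, htj⟩]; rfl
    · rw [if_neg htj, if_neg (by tauto)]
  · rw [if_neg h]
    exact (Finset.sum_eq_zero fun t _ => if_neg (by tauto)).symm

private lemma RHS1_eq (w : List (ℂ × ℂ)) :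
    mu (amit A B) C w = ∑ y ∈ cube w.length,
      if 1 ≤ y.2.2 ∧ y.2.1 + y.2.2 < y.1 then f1 A B C w y else 0 := by
  set n := w.length with hn
  rw [mu_formula]
  rw [cube, Finset.sum_product]
  refine Finset.sum_congr rfl fun k hk => ?_
  simp only [Finset.mem_range] at hk
  have hk' : k ≤ n := by omega
  have hlen : (w.take k).length = k := by rw [List.length_take]; omega
  rw [amit_formula, hlen]
  rw [sum_range_extend k n hk' _ (fun i hik => Finset.sum_eq_zero fun j _ =>
    if_neg (by omega))]
  rw [Finset.sum_mul, Finset.sum_product]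
  refine Finset.sum_congr rfl fun i hi => ?_
  simp only [Finset.mem_range] at hi
  rw [sum_range_extend k n hk' _ (fun j hjk => if_neg (by omega))]
  rw [Finset.sum_mul]
  refine Finset.sum_congr rfl fun j hj => ?_
  simp only [Finset.mem_range] at hj
  rw [ite_mul, zero_mul]
  by_cases h : 1 ≤ j ∧ i + j < k
  · rw [if_pos h, if_pos h]
    obtain ⟨h1, h2⟩ := h
    have e1 : (w.take k).take i = w.take i := by
      rw [List.take_take, min_eq_left (by omega)]
    have e2 : (w.take k).drop i = (w.drop i).take (k - i) := List.drop_take (j := k) (i := i) (l := w)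
    have e3 : ((w.drop i).take (k - i)).take j = (w.drop i).take j := by
      rw [List.take_take, min_eq_left (by omega)]
    have e4 : (w.take k).drop (i + j) = (w.drop (i + j)).take (k - (i + j)) :=
      List.drop_take (j := k) (i := i + j) (l := w)
    rw [e1, e2, e3, e4]
    rfl
  · rw [if_neg h, if_neg h]

private lemma RHS2_eq (w : List (ℂ × ℂ)) :
    mu B (amit A C) w = ∑ y ∈ cube w.length,
      if 1 ≤ y.2.2 ∧ y.2.1 + y.2.2 < w.length - y.1 then f2 A B C w y else 0 := by
  set n := w.length with hn
  rw [mu_formula]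
  rw [cube, Finset.sum_product]
  refine Finset.sum_congr rfl fun t ht => ?_
  simp only [Finset.mem_range] at ht
  have ht' : t ≤ n := by omega
  have hlen : (w.drop t).length = n - t := by rw [List.length_drop]
  rw [amit_formula, hlen]
  rw [sum_range_extend (n - t) n (by omega) _ (fun i hik => Finset.sum_eq_zero fun j _ =>
    if_neg (by omega))]
  rw [Finset.mul_sum, Finset.sum_product]
  refine Finset.sum_congr rfl fun i hi => ?_
  simp only [Finset.mem_range] at hi
  rw [sum_range_extend (n - t) n (by omega) _ (fun j hjk => if_neg (by omega))]
  rw [Finset.mul_sum]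
  refine Finset.sum_congr rfl fun j hj => ?_
  rw [mul_ite, mul_zero]
  simp only [List.drop_drop]
  rfl

end AmitProof

namespace AmitProof
open Bimould

private lemma bij2 (A B C : Bimould) (w : List (ℂ × ℂ)) :
    ∑ x ∈ ((cube w.length).filter (fun x => 1 ≤ x.2.1 ∧ x.1 + x.2.1 < w.length ∧
        x.2.2 ≤ w.length - x.2.1)).filter (fun x => ¬ x.2.2 ≤ x.1), fL A B C w x =
    ∑ y ∈ (cube w.length).filter (fun y => 1 ≤ y.2.2 ∧ y.2.1 + y.2.2 < y.1),
      f1 A B C w y := by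
  refine Finset.sum_nbij' (fun x => (x.2.2 + x.2.1, x.1, x.2.1))
    (fun y => (y.2.1, y.2.2, y.1 - y.2.2)) ?_ ?_ ?_ ?_ ?_
  · rintro ⟨i, j, t⟩ h
    simp only [cube, Finset.mem_filter, Finset.mem_product, Finset.mem_range] at h ⊢
    omega
  · rintro ⟨k, i, j⟩ h
    simp only [cube, Finset.mem_filter, Finset.mem_product, Finset.mem_range] at h ⊢
    omega
  · rintro ⟨i, j, t⟩ h
    simp only [cube, Finset.mem_filter, Finset.mem_product, Finset.mem_range] at h
    simp
    try omega
  · rintro ⟨k, i, j⟩ h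
    simp only [cube, Finset.mem_filter, Finset.mem_product, Finset.mem_range] at h
    simp
    try omega
  · rintro ⟨i, j, t⟩ h
    simp only [cube, Finset.mem_filter, Finset.mem_product, Finset.mem_range] at h
    obtain ⟨⟨-, h1, h2, h3⟩, h4⟩ := h
    have hc : w.drop (i + j) ≠ [] := by
      rw [ne_eq, List.drop_eq_nil_iff]; push_neg; omega
    have hlen : (w.take i).length = i := by rw [List.length_take]; omega
    have hts : t = (w.take i).length + (t - i) := by omega
    have hB' : (flexAC (w.take i) ((w.drop i).take j) (w.drop (i + j))).take t
        = flexAC (w.take i) ((w.drop i).take j) ((w.drop (i + j)).take (t - i)) := by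
      conv_lhs => rw [hts]
      rw [flexAC_take' _ _ _ _ (by omega)]
    have hC' : (flexAC (w.take i) ((w.drop i).take j) (w.drop (i + j))).drop t
        = w.drop (t + j) := by
      conv_lhs => rw [hts]
      rw [flexAC_drop' _ _ _ _ (by omega), List.drop_drop]
      congr 1
      omega
    have e2 : (t + j) - (i + j) = t - i := by omega
    simp only [fL, f1]
    rw [hB', hC', ← flexBr_take _ _ (t - i) (by omega) hc, e2]
    ring

private lemma bij1 (A B C : Bimould) (w : List (ℂ × ℂ)) :
    ∑ x ∈ ((cube w.length).filter (fun x => 1 ≤ x.2.1 ∧ x.1 + x.2.1 < w.length ∧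
        x.2.2 ≤ w.length - x.2.1)).filter (fun x => x.2.2 ≤ x.1), fL A B C w x =
    ∑ y ∈ (cube w.length).filter (fun y => 1 ≤ y.2.2 ∧ y.2.1 + y.2.2 < w.length - y.1),
      f2 A B C w y := by
  refine Finset.sum_nbij' (fun x => (x.2.2, x.1 - x.2.2, x.2.1))
    (fun y => (y.1 + y.2.1, y.2.2, y.1)) ?_ ?_ ?_ ?_ ?_
  · rintro ⟨i, j, t⟩ h
    simp only [cube, Finset.mem_filter, Finset.mem_product, Finset.mem_range] at h ⊢
    omega
  · rintro ⟨t, i, j⟩ h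
    simp only [cube, Finset.mem_filter, Finset.mem_product, Finset.mem_range] at h ⊢
    omega
  · rintro ⟨i, j, t⟩ h
    simp only [cube, Finset.mem_filter, Finset.mem_product, Finset.mem_range] at h
    simp
    try omega
  · rintro ⟨t, i, j⟩ h
    simp only [cube, Finset.mem_filter, Finset.mem_product, Finset.mem_range] at h
    simp
    try omega
  · rintro ⟨i, j, t⟩ h
    simp only [cube, Finset.mem_filter, Finset.mem_product, Finset.mem_range] at h
    obtain ⟨⟨-, h1, h2, h3⟩, h4⟩ := h
    have hc : w.drop (i + j) ≠ [] := by
      rw [ne_eq, List.drop_eq_nil_iff]; push_neg; omega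
    have hlen : (w.take i).length = i := by rw [List.length_take]; omega
    simp only [fL, f2]
    rw [flexAC_take _ _ _ t (by omega) hc, flexAC_drop _ _ _ t (by omega) hc,
      List.take_take, min_eq_left (by omega : t ≤ i), List.drop_take]
    have e1 : t + (i - t) = i := by omega
    have e2 : t + ((i - t) + j) = i + j := by omega
    rw [e1, e2]
    ring

end AmitProof


/-- for any bimould `A ∈ BARI`, the operator `amit(A)` is a derivation
for the `mu`-multiplication of bimoulds. -/
theorem amit_is_mu_derivation (A B C : Bimould)
    (hA : A [] = 0) (hB : B [] = 0) (hC : C [] = 0) :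
    Bimould.amit A (Bimould.mu B C) =
      Bimould.mu (Bimould.amit A B) C + Bimould.mu B (Bimould.amit A C) := by
  funext w
  simp only [Pi.add_apply]
  rw [AmitProof.LHS_eq, AmitProof.RHS1_eq, AmitProof.RHS2_eq,
    ← Finset.sum_filter, ← Finset.sum_filter, ← Finset.sum_filter,
    ← Finset.sum_filter_add_sum_filter_not
      ((AmitProof.cube w.length).filter (fun x => 1 ≤ x.2.1 ∧ x.1 + x.2.1 < w.length ∧
        x.2.2 ≤ w.length - x.2.1)) (fun x => x.2.2 ≤ x.1)]
  rw [AmitProof.bij1, AmitProof.bij2]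
  ring
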